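/- Let λ > 0, ε > 0, B > 0 be real numbers and n ≥ 1 an integer. Let γ : [0,1] → ℂ be a continuously differentiable path with Re γ(t) ≥ 0 for all t, let w : [0,1] → ℂ satisfy Re w(t) ≥ −log B for all t, let k : [0,1] → ℂ satisfy |k(t)| ≤ ε, and suppose φ = w + λγ is differentiable with φ'(t) = −λ·e^{−(n·γ(t) + w(t))}·k(t)·γ'(t) for all t ∈ [0,1]. Then e^{−λεB·L} ≤ |e^{−φ(1)}| / |e^{−φ(0)}| ≤ e^{λεB·L}, where L = ∫₀¹ |e^{−γ(t)}·γ'(t)| dt (the length of the projected path t ↦ e^{−γ(t)}). -/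

import Mathlib

open Complex Real Set

/-- The estimate for the growth of the quasi-first-integral `F = e^{−φ} = x^λ y` of a
prepared saddle foliation in terms of the length `L` of the projected path `t ↦ e^{−γ(t)}`:
along a lift of the path, `|e^{−φ}|` changes by a factor at most `e^{λεB·L}`.  Here
`φ = w + λγ`, `Re γ ≥ 0`, `Re w ≥ −log B`, `|k| ≤ ε` and `φ' = −λ e^{−(nγ + w)} k γ'`
with `n ≥ 1` an integer. -/
theorem saddle_quasi_integral_length_estimate
    (lam ε B : ℝ) (hlam : 0 < lam) (hε : 0 < ε) (hB : 0 < B)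
    (n : ℕ) (hn : 1 ≤ n)
    (γ γ' k w : ℝ → ℂ)
    (hγ : ∀ t ∈ Icc (0:ℝ) 1, HasDerivAt γ (γ' t) t)
    (hγ'c : ContinuousOn γ' (Icc (0:ℝ) 1))
    (hre : ∀ t ∈ Icc (0:ℝ) 1, 0 ≤ (γ t).re)
    (hw : ∀ t ∈ Icc (0:ℝ) 1, -Real.log B ≤ (w t).re)
    (hk : ∀ t ∈ Icc (0:ℝ) 1, ‖k t‖ ≤ ε)
    (hφ : ∀ t ∈ Icc (0:ℝ) 1,
      HasDerivAt (fun s => w s + (lam : ℂ) * γ s)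
        (-(lam : ℂ) * Complex.exp (-(((n : ℂ) * γ t) + w t)) * k t * γ' t) t) :
    Real.exp (-(lam * ε * B *
          (∫ t in (0:ℝ)..1, ‖Complex.exp (-γ t) * γ' t‖))) ≤
        ‖Complex.exp (-(w 1 + (lam : ℂ) * γ 1))‖ /
          ‖Complex.exp (-(w 0 + (lam : ℂ) * γ 0))‖ ∧
      ‖Complex.exp (-(w 1 + (lam : ℂ) * γ 1))‖ /
          ‖Complex.exp (-(w 0 + (lam : ℂ) * γ 0))‖ ≤
        Real.exp (lam * ε * B *
          (∫ t in (0:ℝ)..1, ‖Complex.exp (-γ t) * γ' t‖)) := by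
  set φ : ℝ → ℂ := fun s => w s + (lam : ℂ) * γ s with hφdef
  set q : ℝ → ℝ := fun t => ((projIcc (0:ℝ) 1 zero_le_one t : Icc (0:ℝ) 1) : ℝ) with hq
  have hqc : Continuous q := continuous_subtype_val.comp (continuous_projIcc)
  have hqmem : ∀ t, q t ∈ Icc (0:ℝ) 1 := fun t => (projIcc (0:ℝ) 1 zero_le_one t).2
  have hqid : ∀ t ∈ Icc (0:ℝ) 1, q t = t := fun t ht => by
    simp [hq, projIcc_of_mem zero_le_one ht]
  set p : ℝ → ℝ := fun t => ‖Complex.exp (-γ (q t)) * γ' (q t)‖ with hp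
  have hγc : ContinuousOn γ (Icc (0:ℝ) 1) := fun t ht =>
    (hγ t ht).continuousAt.continuousWithinAt
  have hpc : Continuous p := by
    apply continuous_norm.comp
    exact ((Complex.continuous_exp.comp
        ((hγc.comp_continuous hqc hqmem).neg)).mul (hγ'c.comp_continuous hqc hqmem))
  set M : ℝ := lam * ε * B with hM
  have hM0 : 0 ≤ M := by positivity
  set Bd : ℝ → ℝ := fun t => M * ∫ s in (0:ℝ)..t, p s with hBd
  have hBd' : ∀ x : ℝ, HasDerivAt Bd (M * p x) x := fun x =>
    ((hpc.integral_hasStrictDerivAt 0 x).hasDerivAt).const_mul M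
  -- the key bound
  have key : ∀ ⦃x⦄, x ∈ Icc (0:ℝ) 1 → ‖φ x - φ 0‖ ≤ Bd x := by
    apply image_norm_le_of_norm_deriv_right_le_deriv_boundary
      (f' := fun t => -(lam : ℂ) * Complex.exp (-(((n : ℂ) * γ t) + w t)) * k t * γ' t)
      (fun t ht => ((hφ t ht).sub_const (φ 0)).continuousAt.continuousWithinAt)
      (fun t ht => (((hφ t (Ico_subset_Icc_self ht)).sub_const (φ 0)).hasDerivWithinAt))
      (by simp [hBd])
      hBd'
    intro x hx
    have hx' : x ∈ Icc (0:ℝ) 1 := Ico_subset_Icc_self hx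
    have hre' := hre x hx'
    have hw' := hw x hx'
    have hk' := hk x hx'
    have hnre : ((n : ℂ) * γ x).re = (n : ℝ) * (γ x).re := by
      simp [Complex.mul_re]
    have h1 : Real.exp (-(((n : ℂ) * γ x) + w x).re) ≤ Real.exp (-(γ x).re) * B := by
      have : -(((n : ℂ) * γ x) + w x).re = (-(n : ℝ) * (γ x).re) + (-(w x).re) := by
        simp [hnre]; ring
      rw [this, Real.exp_add]
      apply mul_le_mul
      · apply Real.exp_le_exp.2
        nlinarith [(Nat.one_le_cast (α := ℝ)).2 hn]
      · calc Real.exp (-(w x).re) ≤ Real.exp (Real.log B) := Real.exp_le_exp.2 (by linarith)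
          _ = B := Real.exp_log hB
      · positivity
      · positivity
    have hpid : p x = Real.exp (-(γ x).re) * ‖γ' x‖ := by
      simp [hp, hqid x hx', map_mul, Complex.norm_exp]
    rw [hpid]
    have : ‖-(lam : ℂ) * Complex.exp (-(((n : ℂ) * γ x) + w x)) * k x * γ' x‖
        = lam * (Real.exp (-(((n : ℂ) * γ x) + w x).re) * (‖k x‖ * ‖γ' x‖)) := by
      simp [Complex.norm_exp, abs_of_pos hlam, mul_assoc]
    rw [this]
    have habs : (0:ℝ) ≤ ‖γ' x‖ := norm_nonneg _
    calc lam * (Real.exp (-(((n : ℂ) * γ x) + w x).re) * (‖k x‖ * ‖γ' x‖))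
        ≤ lam * ((Real.exp (-(γ x).re) * B) * (ε * ‖γ' x‖)) := by
          apply mul_le_mul_of_nonneg_left _ hlam.le
          apply mul_le_mul h1 (mul_le_mul_of_nonneg_right hk' habs) (by positivity) (by positivity)
      _ = M * (Real.exp (-(γ x).re) * ‖γ' x‖) := by rw [hM]; ring
  have h1mem : (1:ℝ) ∈ Icc (0:ℝ) 1 := by norm_num
  have hint : (∫ s in (0:ℝ)..1, p s)
      = ∫ t in (0:ℝ)..1, ‖Complex.exp (-γ t) * γ' t‖ := by
    apply intervalIntegral.integral_congr
    intro t ht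
    rw [uIcc_of_le zero_le_one] at ht
    simp [hp, hqid t ht]
  have hkey1 : ‖φ 1 - φ 0‖ ≤ M * ∫ t in (0:ℝ)..1, ‖Complex.exp (-γ t) * γ' t‖ := by
    simpa [Bd, hint] using key h1mem
  have hDre : |(φ 1).re - (φ 0).re|
      ≤ M * ∫ t in (0:ℝ)..1, ‖Complex.exp (-γ t) * γ' t‖ := by
    refine le_trans ?_ hkey1
    have := Complex.abs_re_le_norm (φ 1 - φ 0)
    simpa [Complex.sub_re] using this
  have hratio : ‖Complex.exp (-(w 1 + (lam : ℂ) * γ 1))‖ /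
      ‖Complex.exp (-(w 0 + (lam : ℂ) * γ 0))‖
      = Real.exp ((φ 0).re - (φ 1).re) := by
    rw [Complex.norm_exp, Complex.norm_exp, ← Real.exp_sub]
    simp only [hφdef, Complex.neg_re, Complex.add_re, Complex.mul_re, Complex.ofReal_re,
      Complex.ofReal_im]
    ring
  rw [hratio]
  rw [abs_le] at hDre
  constructor
  · apply Real.exp_le_exp.2; linarith [hDre.2]
  · apply Real.exp_le_exp.2; linarith [hDre.1]
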